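/- Fix x ∈ Σ and assume that either the control problem has the approximation property at x (and at x for every initial time t, with trajectories on [t,T]) or the point x is unreachable. Then for every t ∈ [0,T] the value function u(·,t) is continuous at x. -/

import Mathlib

open MeasureTheory Set Filter Topology

noncomputable section

/-- Squared Euclidean norm on ℝ². -/
def sq2 (v : ℝ × ℝ) : ℝ := v.1 ^ 2 + v.2 ^ 2

/-- Euclidean norm on ℝ². -/
def enorm2 (v : ℝ × ℝ) : ℝ := Real.sqrt (sq2 v)

/-- `(y, α)` is an admissible trajectory for the Grushin-type dynamics on `[t,T]`,
starting from `x` and constrained to the set `S`:  `y ∈ W^{1,1}`, `α` measurable,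
`y₁' = α₁`, `y₂' = |y₁|^ν α₂` a.e. (in integral form), `y(t) = x`, `y(s) ∈ S`. -/
def Admissible (ν : ℝ) (S : Set (ℝ × ℝ)) (t T : ℝ) (x : ℝ × ℝ)
    (y α : ℝ → ℝ × ℝ) : Prop :=
  Measurable α ∧
  IntervalIntegrable (fun τ => (α τ).1) volume t T ∧
  IntervalIntegrable (fun τ => |(y τ).1| ^ ν * (α τ).2) volume t T ∧
  (∀ s ∈ Icc t T, (y s).1 = x.1 + ∫ τ in t..s, (α τ).1) ∧
  (∀ s ∈ Icc t T, (y s).2 = x.2 + ∫ τ in t..s, |(y τ).1| ^ ν * (α τ).2) ∧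
  (∀ s ∈ Icc t T, y s ∈ S)

/-- `α ∈ L²(t,T)`. -/
def InL2 (α : ℝ → ℝ × ℝ) (t T : ℝ) : Prop :=
  IntervalIntegrable (fun τ => sq2 (α τ)) volume t T

/-- The cost `J_t(x;(y,α))`. -/
def cost (l : ℝ × ℝ → ℝ → ℝ) (g : ℝ × ℝ → ℝ) (t T : ℝ) (y α : ℝ → ℝ × ℝ) : ℝ :=
  (∫ τ in t..T, (sq2 (α τ) / 2 + l (y τ) τ)) + g (y T)

/-- `Γ_t[x]`: admissible trajectories from `(x,t)` with finite cost (`α ∈ L²`). -/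
def Gamma (ν : ℝ) (S : Set (ℝ × ℝ)) (t T : ℝ) (x : ℝ × ℝ) :
    Set ((ℝ → ℝ × ℝ) × (ℝ → ℝ × ℝ)) :=
  {p | Admissible ν S t T x p.1 p.2 ∧ InL2 p.2 t T}

/-- `Γ_t^{opt}[x]`: optimal trajectories. -/
def GammaOpt (ν : ℝ) (S : Set (ℝ × ℝ)) (l : ℝ × ℝ → ℝ → ℝ) (g : ℝ × ℝ → ℝ)
    (t T : ℝ) (x : ℝ × ℝ) : Set ((ℝ → ℝ × ℝ) × (ℝ → ℝ × ℝ)) :=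
  {p | p ∈ Gamma ν S t T x ∧
    ∀ q ∈ Gamma ν S t T x, cost l g t T p.1 p.2 ≤ cost l g t T q.1 q.2}

/-- The value function `u(x,t)`. -/
def valueFun (ν : ℝ) (S : Set (ℝ × ℝ)) (l : ℝ × ℝ → ℝ → ℝ) (g : ℝ × ℝ → ℝ)
    (T : ℝ) (x : ℝ × ℝ) (t : ℝ) : ℝ :=
  sInf ((fun p => cost l g t T p.1 p.2) '' Gamma ν S t T x)

/-- Closed graph property of `Γ_t^{opt}[x]`. -/
def ClosedGraphAt (ν : ℝ) (S : Set (ℝ × ℝ)) (l : ℝ × ℝ → ℝ → ℝ) (g : ℝ × ℝ → ℝ)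
    (t T : ℝ) (x : ℝ × ℝ) : Prop :=
  ∀ (xs : ℕ → ℝ × ℝ) (ys as : ℕ → ℝ → ℝ × ℝ) (y : ℝ → ℝ × ℝ),
    (∀ n, xs n ∈ S) → Tendsto xs atTop (𝓝 x) →
    (∀ n, (ys n, as n) ∈ GammaOpt ν S l g t T (xs n)) →
    TendstoUniformlyOn ys y atTop (Icc t T) →
    ∃ α, (y, α) ∈ GammaOpt ν S l g t T x

/-- Approximation property at `x` for initial time `t`. -/
def ApproxProperty (ν : ℝ) (S : Set (ℝ × ℝ)) (l : ℝ × ℝ → ℝ → ℝ) (g : ℝ × ℝ → ℝ)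
    (t T : ℝ) (x : ℝ × ℝ) : Prop :=
  ∀ y α, (y, α) ∈ Gamma ν S t T x →
    ∀ xs : ℕ → ℝ × ℝ, (∀ n, xs n ∈ S) → Tendsto xs atTop (𝓝 x) →
      ∃ ys as : ℕ → ℝ → ℝ × ℝ,
        (∀ n, (ys n, as n) ∈ Gamma ν S t T (xs n)) ∧
        TendstoUniformlyOn ys y atTop (Icc t T) ∧
        Tendsto (fun n => (∫ τ in t..T, sq2 (as n τ)) - ∫ τ in t..T, sq2 (α τ))
          atTop (𝓝 0) ∧
        Tendsto (fun n => cost l g t T (ys n) (as n)) atTop (𝓝 (cost l g t T y α))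

/-- The point `x` is unreachable: no admissible trajectory with finite cost,
starting from another point of `S`, reaches `x` at time `T`. -/
def Unreachable (ν : ℝ) (S : Set (ℝ × ℝ)) (T : ℝ) (x : ℝ × ℝ) : Prop :=
  ∀ xb ∈ S \ {x}, ¬ ∃ p ∈ Gamma ν S 0 T xb, p.1 T = x

/-- Reachability property of the dynamics at `x`. -/
def ReachProperty (ν : ℝ) (S : Set (ℝ × ℝ)) (T : ℝ) (x : ℝ × ℝ) : Prop :=
  ∀ xs : ℕ → ℝ × ℝ, (∀ n, xs n ∈ S) → Tendsto xs atTop (𝓝 x) →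
    ∃ (δ : ℕ → ℝ) (ys as : ℕ → ℝ → ℝ × ℝ),
      (∀ n, δ n ∈ Icc 0 T) ∧
      (∀ n, Admissible ν S 0 (δ n) (xs n) (ys n) (as n) ∧ InL2 (as n) 0 (δ n) ∧
        ys n (δ n) = x) ∧
      Tendsto (fun n => ∫ τ in (0:ℝ)..(δ n), sq2 (as n τ)) atTop (𝓝 0) ∧
      Tendsto δ atTop (𝓝 0)

/-- `x₁`-convexity of a subset of the plane. -/
def X1Convex (A : Set (ℝ × ℝ)) : Prop :=
  ∀ a b h : ℝ, (a, b) ∈ A → 0 < h → (a + h, b) ∈ A →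
    ∀ t ∈ Icc (0:ℝ) 1, (a + t * h, b) ∈ A

/-- Hypothesis (H1). -/
def HypH1 (S : Set (ℝ × ℝ)) : Prop :=
  ∀ x0 ∈ frontier S, x0.1 ≠ 0 →
    ∃ R > 0, X1Convex (S ∩ Metric.ball x0 R) ∧
      ((S ∩ Metric.ball x0 R ∩ {p | x0.2 < p.2}).Nonempty →
        ∃ C > 0,
          {p : ℝ × ℝ | p.1 = x0.1 ∧ p.2 ∈ Ioc x0.2 (x0.2 + R)} ⊆ S ∨
          {p : ℝ × ℝ | p.1 ∈ Ioc x0.1 (x0.1 + R) ∧ p.2 = x0.2 + C * (p.1 - x0.1)} ⊆ S ∨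
          {p : ℝ × ℝ | p.1 ∈ Ico (x0.1 - R) x0.1 ∧ p.2 = x0.2 + C * (x0.1 - p.1)} ⊆ S) ∧
      ((S ∩ Metric.ball x0 R ∩ {p | p.2 < x0.2}).Nonempty →
        ∃ C > 0,
          {p : ℝ × ℝ | p.1 = x0.1 ∧ p.2 ∈ Ico (x0.2 - R) x0.2} ⊆ S ∨
          {p : ℝ × ℝ | p.1 ∈ Ioc x0.1 (x0.1 + R) ∧ p.2 = x0.2 - C * (p.1 - x0.1)} ⊆ S ∨
          {p : ℝ × ℝ | p.1 ∈ Ico (x0.1 - R) x0.1 ∧ p.2 = x0.2 - C * (x0.1 - p.1)} ⊆ S)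

/-- Hypothesis (H2). -/
def HypH2 (ν : ℝ) (S : Set (ℝ × ℝ)) : Prop :=
  ∀ x0 ∈ frontier S, x0.1 = 0 →
    ∃ R > 0, X1Convex (S ∩ Metric.ball x0 R) ∧
      ((S ∩ Metric.ball x0 R ∩ {p | x0.2 < p.2}).Nonempty →
        ∃ C > 0,
          {p : ℝ × ℝ | p.1 ∈ Ioc 0 R ∧ p.2 = x0.2 + C * p.1 ^ (ν + 1)} ⊆ S ∨
          {p : ℝ × ℝ | p.1 ∈ Ico (-R) 0 ∧ p.2 = x0.2 + C * (-p.1) ^ (ν + 1)} ⊆ S) ∧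
      ((S ∩ Metric.ball x0 R ∩ {p | p.2 < x0.2}).Nonempty →
        ∃ C > 0,
          {p : ℝ × ℝ | p.1 ∈ Ioc 0 R ∧ p.2 = x0.2 - C * p.1 ^ (ν + 1)} ⊆ S ∨
          {p : ℝ × ℝ | p.1 ∈ Ico (-R) 0 ∧ p.2 = x0.2 - C * (-p.1) ^ (ν + 1)} ⊆ S)

/-! ### Auxiliary lemmas -/

section Aux

open intervalIntegral

lemma sq2_nn (v : ℝ × ℝ) : 0 ≤ sq2 v := add_nonneg (sq_nonneg _) (sq_nonneg _)

lemma sq2_fst_sq_le (v : ℝ × ℝ) : v.1 ^ 2 ≤ sq2 v := le_add_of_nonneg_right (sq_nonneg _)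

lemma sq2_snd_sq_le (v : ℝ × ℝ) : v.2 ^ 2 ≤ sq2 v := le_add_of_nonneg_left (sq_nonneg _)

variable {T ν t : ℝ} {S : Set (ℝ × ℝ)} {l : ℝ × ℝ → ℝ → ℝ} {g : ℝ × ℝ → ℝ}
  {x z : ℝ × ℝ} {y α : ℝ → ℝ × ℝ}

lemma adm_y_start (htT : t ≤ T) (hA : Admissible ν S t T x y α) : y t = x := by
  obtain ⟨-, -, -, e1, e2, -⟩ := hA
  have ht : t ∈ Icc t T := ⟨le_rfl, htT⟩
  have h1 := e1 t ht; have h2 := e2 t ht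
  rw [intervalIntegral.integral_same] at h1 h2
  exact Prod.ext (by simpa using h1) (by simpa using h2)

lemma adm_continuousOn (htT : t ≤ T) (hA : Admissible ν S t T x y α) :
    ContinuousOn y (Icc t T) := by
  obtain ⟨-, h1, h2, e1, e2, -⟩ := hA
  have i1 : IntegrableOn (fun τ => (α τ).1) (uIcc t T) volume := by
    rw [uIcc_of_le htT, integrableOn_Icc_iff_integrableOn_Ioc]
    exact (intervalIntegrable_iff_integrableOn_Ioc_of_le htT).1 h1
  have i2 : IntegrableOn (fun τ => |(y τ).1| ^ ν * (α τ).2) (uIcc t T) volume := by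
    rw [uIcc_of_le htT, integrableOn_Icc_iff_integrableOn_Ioc]
    exact (intervalIntegrable_iff_integrableOn_Ioc_of_le htT).1 h2
  have c1 := intervalIntegral.continuousOn_primitive_interval i1
  have c2 := intervalIntegral.continuousOn_primitive_interval i2
  rw [uIcc_of_le htT] at c1 c2
  have hc : ContinuousOn (fun s => ((x.1 + ∫ τ in t..s, (α τ).1 : ℝ),
      (x.2 + ∫ τ in t..s, |(y τ).1| ^ ν * (α τ).2 : ℝ))) (Icc t T) :=
    (continuousOn_const.add c1).prodMk (continuousOn_const.add c2)
  exact hc.congr fun s hs => Prod.ext (by rw [e1 s hs]) (by rw [e2 s hs])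

lemma l_cont_comp (hl : ContinuousOn (fun q : (ℝ × ℝ) × ℝ => l q.1 q.2) (S ×ˢ Icc 0 T))
    (ht : 0 ≤ t) (hy : ContinuousOn y (Icc t T)) (hyS : ∀ s ∈ Icc t T, y s ∈ S) :
    ContinuousOn (fun τ => l (y τ) τ) (Icc t T) := by
  have hpair : ContinuousOn (fun τ => ((y τ, τ) : (ℝ × ℝ) × ℝ)) (Icc t T) :=
    hy.prodMk continuousOn_id
  exact hl.comp hpair fun τ hτ => ⟨hyS τ hτ, ⟨ht.trans hτ.1, hτ.2⟩⟩

lemma l_comp_intervalIntegrable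
    (hl : ContinuousOn (fun q : (ℝ × ℝ) × ℝ => l q.1 q.2) (S ×ˢ Icc 0 T))
    (ht : 0 ≤ t) (htT : t ≤ T) (hA : Admissible ν S t T z y α) :
    IntervalIntegrable (fun τ => l (y τ) τ) volume t T := by
  apply ContinuousOn.intervalIntegrable
  rw [uIcc_of_le htT]
  exact l_cont_comp hl ht (adm_continuousOn htT hA) hA.2.2.2.2.2

lemma cost_decomp (ht : 0 ≤ t) (htT : t ≤ T)
    (hl : ContinuousOn (fun q : (ℝ × ℝ) × ℝ => l q.1 q.2) (S ×ˢ Icc 0 T))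
    (hA : Admissible ν S t T z y α) (h2 : InL2 α t T) :
    cost l g t T y α
      = (∫ τ in t..T, sq2 (α τ)) / 2 + (∫ τ in t..T, l (y τ) τ) + g (y T) := by
  have hlc := l_comp_intervalIntegrable hl ht htT hA
  unfold cost
  rw [intervalIntegral.integral_add (h2.div_const 2) hlc, intervalIntegral.integral_div]

lemma int_sq2_nonneg (htT : t ≤ T) :
    0 ≤ ∫ τ in t..T, sq2 (α τ) :=
  intervalIntegral.integral_nonneg htT fun u _ => sq2_nn _

lemma exists_bound (hT : 0 ≤ T) (hSc : IsCompact S)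
    (hl : ContinuousOn (fun q : (ℝ × ℝ) × ℝ => l q.1 q.2) (S ×ˢ Icc 0 T))
    (hg : ContinuousOn g S) :
    ∃ M : ℝ, 0 ≤ M ∧ (∀ p ∈ S, ∀ τ ∈ Icc (0:ℝ) T, |l p τ| ≤ M) ∧ ∀ p ∈ S, |g p| ≤ M := by
  obtain ⟨M1, hM1⟩ := (hSc.prod isCompact_Icc).exists_bound_of_continuousOn hl
  obtain ⟨M2, hM2⟩ := hSc.exists_bound_of_continuousOn hg
  refine ⟨max (max M1 M2) 0, le_max_right _ _, ?_, ?_⟩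
  · intro p hp τ hτ
    have := hM1 (p, τ) ⟨hp, hτ⟩
    simp only [Real.norm_eq_abs] at this
    exact this.trans (le_trans (le_max_left _ _) (le_max_left _ _))
  · intro p hp
    have := hM2 p hp
    simp only [Real.norm_eq_abs] at this
    exact this.trans (le_trans (le_max_right _ _) (le_max_left _ _))

lemma cost_ge {M : ℝ} (ht : 0 ≤ t) (htT : t ≤ T)
    (hl : ContinuousOn (fun q : (ℝ × ℝ) × ℝ => l q.1 q.2) (S ×ˢ Icc 0 T))
    (hMl : ∀ p ∈ S, ∀ τ ∈ Icc (0:ℝ) T, |l p τ| ≤ M) (hMg : ∀ p ∈ S, |g p| ≤ M)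
    (hA : Admissible ν S t T z y α) (h2 : InL2 α t T) :
    (∫ τ in t..T, sq2 (α τ)) / 2 - M * (T - t) - M ≤ cost l g t T y α := by
  rw [cost_decomp ht htT hl hA h2]
  have hyS := hA.2.2.2.2.2
  have hbl : |∫ τ in t..T, l (y τ) τ| ≤ M * (T - t) := by
    have := intervalIntegral.norm_integral_le_of_norm_le_const (C := M)
      (f := fun τ => l (y τ) τ) (a := t) (b := T) ?_
    · rwa [Real.norm_eq_abs, abs_of_nonneg (sub_nonneg.2 htT)] at this
    · intro u hu
      rw [uIoc_of_le htT] at hu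
      have huI : u ∈ Icc t T := ⟨le_of_lt hu.1, hu.2⟩
      exact hMl (y u) (hyS u huI) u ⟨ht.trans huI.1, huI.2⟩
  have hbg : |g (y T)| ≤ M := hMg (y T) (hyS T ⟨htT, le_rfl⟩)
  have h1 := abs_le.1 hbl
  have h2' := abs_le.1 hbg
  linarith [h1.1, h2'.1]

lemma gamma_const_mem (htT : t ≤ T) (hz : z ∈ S) :
    ((fun _ => z, fun _ => 0) : (ℝ → ℝ × ℝ) × (ℝ → ℝ × ℝ)) ∈ Gamma ν S t T z := by
  refine ⟨⟨measurable_const, ?_, ?_, ?_, ?_, fun s _ => hz⟩, ?_⟩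
  · simpa using intervalIntegrable_const (c := (0:ℝ)) (μ := volume) (a := t) (b := T)
  · simpa using intervalIntegrable_const (c := (0:ℝ)) (μ := volume) (a := t) (b := T)
  · intro s _; simp
  · intro s _; simp
  · unfold InL2
    simpa [sq2] using intervalIntegrable_const (c := (0:ℝ)) (μ := volume) (a := t) (b := T)

lemma cost_const_traj :
    cost l g t T (fun _ => z) (fun _ => 0) = (∫ τ in t..T, l z τ) + g z := by
  unfold cost
  congr 1
  apply intervalIntegral.integral_congr
  intro τ _
  simp [sq2]

end Aux
section ValueBasics

open intervalIntegral

variable {T ν t : ℝ} {S : Set (ℝ × ℝ)} {l : ℝ × ℝ → ℝ → ℝ} {g : ℝ × ℝ → ℝ}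
  {x z : ℝ × ℝ} {y α : ℝ → ℝ × ℝ} {M : ℝ}

lemma value_bddBelow (ht : 0 ≤ t) (htT : t ≤ T)
    (hl : ContinuousOn (fun q : (ℝ × ℝ) × ℝ => l q.1 q.2) (S ×ˢ Icc 0 T))
    (hM : 0 ≤ M)
    (hMl : ∀ p ∈ S, ∀ τ ∈ Icc (0:ℝ) T, |l p τ| ≤ M) (hMg : ∀ p ∈ S, |g p| ≤ M) :
    BddBelow ((fun p => cost l g t T p.1 p.2) '' Gamma ν S t T z) := by
  refine ⟨-(M * T + M), ?_⟩
  rintro c ⟨p, hp, rfl⟩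
  have h := cost_ge ht htT hl hMl hMg hp.1 hp.2
  have h0 : 0 ≤ ∫ τ in t..T, sq2 (p.2 τ) := int_sq2_nonneg htT
  have : M * (T - t) ≤ M * T := by nlinarith
  simp only [mem_lowerBounds] at *
  linarith

lemma value_le_cost (ht : 0 ≤ t) (htT : t ≤ T)
    (hl : ContinuousOn (fun q : (ℝ × ℝ) × ℝ => l q.1 q.2) (S ×ˢ Icc 0 T))
    (hM : 0 ≤ M)
    (hMl : ∀ p ∈ S, ∀ τ ∈ Icc (0:ℝ) T, |l p τ| ≤ M) (hMg : ∀ p ∈ S, |g p| ≤ M)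
    {p : (ℝ → ℝ × ℝ) × (ℝ → ℝ × ℝ)} (hp : p ∈ Gamma ν S t T z) :
    valueFun ν S l g T z t ≤ cost l g t T p.1 p.2 :=
  csInf_le (value_bddBelow ht htT hl hM hMl hMg) ⟨p, hp, rfl⟩

lemma value_le_const (ht : 0 ≤ t) (htT : t ≤ T)
    (hl : ContinuousOn (fun q : (ℝ × ℝ) × ℝ => l q.1 q.2) (S ×ˢ Icc 0 T))
    (hM : 0 ≤ M)
    (hMl : ∀ p ∈ S, ∀ τ ∈ Icc (0:ℝ) T, |l p τ| ≤ M) (hMg : ∀ p ∈ S, |g p| ≤ M)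
    (hz : z ∈ S) :
    valueFun ν S l g T z t ≤ (∫ τ in t..T, l z τ) + g z := by
  have := value_le_cost (ν := ν) (z := z) ht htT hl hM hMl hMg (gamma_const_mem htT hz)
  rwa [cost_const_traj] at this

lemma value_exists_near_opt (htT : t ≤ T) (hz : z ∈ S) {ε : ℝ} (hε : 0 < ε) :
    ∃ p ∈ Gamma ν S t T z, cost l g t T p.1 p.2 < valueFun ν S l g T z t + ε := by
  have hne : ((fun p => cost l g t T p.1 p.2) '' Gamma ν S t T z).Nonempty :=
    ⟨_, ⟨_, gamma_const_mem htT hz, rfl⟩⟩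
  obtain ⟨a, ⟨p, hp, rfl⟩, ha⟩ := Real.lt_sInf_add_pos hne hε
  exact ⟨p, hp, ha⟩

lemma value_at_T (hT : 0 ≤ T) (hz : z ∈ S) : valueFun ν S l g T z T = g z := by
  have himg : (fun p => cost l g T T p.1 p.2) '' Gamma ν S T T z = {g z} := by
    apply Subset.antisymm
    · rintro c ⟨p, hp, rfl⟩
      have hyT : p.1 T = z := adm_y_start le_rfl hp.1
      simp [cost, hyT]
    · intro c hc
      simp only [mem_singleton_iff] at hc
      subst hc
      exact ⟨_, gamma_const_mem le_rfl hz, by simp [cost]⟩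
  unfold valueFun
  rw [himg, csInf_singleton]

end ValueBasics
section Unreach

open intervalIntegral

variable {T ν t : ℝ} {S : Set (ℝ × ℝ)} {l : ℝ × ℝ → ℝ → ℝ} {g : ℝ × ℝ → ℝ}
  {x z : ℝ × ℝ} {y α : ℝ → ℝ × ℝ} {M : ℝ}

/-- Helper: affine substitution integrability. -/
lemma intervalIntegrable_comp_affine {f : ℝ → ℝ} {a b d c : ℝ}
    (hf : IntervalIntegrable f volume a b) (hc : c ≠ 0) :
    IntervalIntegrable (fun τ => f (d - c * τ)) volume ((d - a)/c) ((d - b)/c) := by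
  have h1 := hf.comp_sub_left d
  have h2 := h1.comp_mul_left (c := c)
  exact h2

/-- Helper: affine substitution integral identity. -/
lemma integral_comp_affine {f : ℝ → ℝ} {c : ℝ} (d : ℝ) (hc : c ≠ 0) (s : ℝ) :
    ∫ τ in (0:ℝ)..s, f (d - c * τ) = c⁻¹ * ∫ u in (d - c * s)..d, f u := by
  have h1 : ∫ τ in (0:ℝ)..s, (fun u => f (d - u)) (c * τ)
      = c⁻¹ • ∫ u in (c * 0)..(c * s), f (d - u) :=
    intervalIntegral.integral_comp_mul_left (fun u => f (d - u)) hc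
  simp only [mul_zero] at h1
  rw [show (∫ τ in (0:ℝ)..s, f (d - c * τ)) = ∫ τ in (0:ℝ)..s, (fun u => f (d - u)) (c * τ) from rfl, h1,
    intervalIntegral.integral_comp_sub_left f d]
  simp [smul_eq_mul]

lemma unreachable_traj_const (hT : 0 < T) (hUn : Unreachable ν S T x)
    (htT : t ≤ T) {p : (ℝ → ℝ × ℝ) × (ℝ → ℝ × ℝ)} (hp : p ∈ Gamma ν S t T x) :
    ∀ s ∈ Icc t T, p.1 s = x := by
  by_contra hcon
  push_neg at hcon
  obtain ⟨s₀, hs₀, hne⟩ := hcon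
  obtain ⟨⟨hmeas, h1, h2, e1, e2, hS⟩, hL2⟩ := hp
  have hyt : p.1 t = x := adm_y_start htT ⟨hmeas, h1, h2, e1, e2, hS⟩
  have hts₀ : t < s₀ := by
    rcases lt_or_eq_of_le hs₀.1 with h | h
    · exact h
    · exact absurd (h ▸ hyt) hne
  set c : ℝ := (s₀ - t)/T with hcdef
  have hc0 : 0 < c := div_pos (by linarith) hT
  have hcne : c ≠ 0 := ne_of_gt hc0
  set θ : ℝ → ℝ := fun s => s₀ - c * s with hθdef
  have hcT : c * T = s₀ - t := by rw [hcdef]; field_simp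
  have hθmem : ∀ s ∈ Icc (0:ℝ) T, θ s ∈ Icc t T := by
    intro s hs
    have hcs : c * s ≤ c * T := mul_le_mul_of_nonneg_left hs.2 hc0.le
    have hcs0 : 0 ≤ c * s := mul_nonneg hc0.le hs.1
    constructor
    · simp only [hθdef]; linarith
    · simp only [hθdef]; linarith [hs₀.2]
  have hθT : θ T = t := by simp only [hθdef]; linarith
  have hθ0 : θ 0 = s₀ := by simp [hθdef]
  -- reversed trajectory
  set yh : ℝ → ℝ × ℝ := fun s => p.1 (θ s) with hyh
  set ah : ℝ → ℝ × ℝ := fun s => ((-c) * (p.2 (θ s)).1, (-c) * ((fun u => (p.2 u).2) (θ s))) with hah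
  have hθmeas : Measurable θ := by
    have : Measurable fun s : ℝ => c * s := measurable_const.mul measurable_id
    exact measurable_const.sub this
  -- integrability transfer
  have key_int : ∀ f : ℝ → ℝ, IntervalIntegrable f volume t T →
      IntervalIntegrable (fun τ => f (θ τ)) volume 0 T := by
    intro f hf
    have hf' : IntervalIntegrable f volume t s₀ :=
      hf.mono_set (by rw [uIcc_of_le htT, uIcc_of_le hts₀.le]; exact Icc_subset_Icc le_rfl hs₀.2)
    have := intervalIntegrable_comp_affine (d := s₀) hf' hcne
    have hA : (s₀ - t)/c = T := by
      rw [hcdef, div_div_eq_mul_div, mul_comm, mul_div_assoc,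
        div_self (by linarith : s₀ - t ≠ 0), mul_one]
    have hB : (s₀ - s₀)/c = 0 := by simp
    rw [hA, hB] at this
    exact this.symm
  -- integral identity transfer
  have key_eq : ∀ (f : ℝ → ℝ), IntervalIntegrable f volume t T →
      ∀ s ∈ Icc (0:ℝ) T,
      (∫ τ in (0:ℝ)..s, (-c) * f (θ τ))
        = (∫ u in t..(θ s), f u) - ∫ u in t..s₀, f u := by
    intro f hf s hs
    have hint : ∫ τ in (0:ℝ)..s, f (θ τ) = c⁻¹ * ∫ u in (θ s)..s₀, f u := by
      have := integral_comp_affine (f := f) (c := c) s₀ hcne s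
      simpa [hθdef] using this
    have hIa : IntervalIntegrable f volume t (θ s) := by
      apply hf.mono_set
      rw [uIcc_of_le htT, uIcc_of_le (hθmem s hs).1]
      exact Icc_subset_Icc le_rfl (hθmem s hs).2
    have hIb : IntervalIntegrable f volume t s₀ := by
      apply hf.mono_set
      rw [uIcc_of_le htT, uIcc_of_le hts₀.le]
      exact Icc_subset_Icc le_rfl hs₀.2
    have hsub : (∫ u in t..(θ s), f u) - ∫ u in t..s₀, f u = ∫ u in s₀..(θ s), f u :=
      intervalIntegral.integral_interval_sub_left hIa hIb
    rw [intervalIntegral.integral_const_mul, hint, hsub, intervalIntegral.integral_symm]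
    field_simp
  -- membership
  have hmem : ((yh, ah) : (ℝ → ℝ × ℝ) × (ℝ → ℝ × ℝ)) ∈ Gamma ν S 0 T (p.1 s₀) := by
    constructor
    · refine ⟨?_, ?_, ?_, ?_, ?_, ?_⟩
      · apply Measurable.prod
        · exact (measurable_fst.comp (hmeas.comp hθmeas)).const_mul _
        · exact (measurable_snd.comp (hmeas.comp hθmeas)).const_mul _
      · have := (key_int _ h1).const_mul (-c)
        simpa [hah] using this
      · have h2' : IntervalIntegrable (fun τ => (-c) * ((fun u => |(p.1 u).1| ^ ν * (p.2 u).2) (θ τ))) volume 0 T :=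
          (key_int _ h2).const_mul (-c)
        have hfe : (fun τ => |(yh τ).1| ^ ν * (ah τ).2)
            = fun τ => (-c) * ((fun u => |(p.1 u).1| ^ ν * (p.2 u).2) (θ τ)) := by
          funext τ; simp only [hyh, hah]; ring
        rw [hfe]; exact h2'
      · intro s hs
        have := key_eq _ h1 s hs
        simp only [hah]
        rw [this]
        have hA := e1 (θ s) (hθmem s hs)
        have hB := e1 s₀ (Icc_subset_Icc le_rfl le_rfl ⟨hs₀.1, hs₀.2⟩)
        simp only [hyh]
        rw [hA, hB]; ring
      · intro s hs
        have := key_eq _ h2 s hs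
        have hintg : (∫ τ in (0:ℝ)..s, |(yh τ).1| ^ ν * (ah τ).2)
            = ∫ τ in (0:ℝ)..s, (-c) * ((fun u => |(p.1 u).1| ^ ν * (p.2 u).2) (θ τ)) := by
          apply intervalIntegral.integral_congr
          intro τ _
          simp only [hyh, hah]
          ring
        rw [hintg, this]
        have hA := e2 (θ s) (hθmem s hs)
        have hB := e2 s₀ ⟨hs₀.1, hs₀.2⟩
        simp only [hyh]
        rw [hA, hB]; ring
      · intro s hs
        exact hS (θ s) (hθmem s hs)
    · unfold InL2
      have hii : IntervalIntegrable (fun τ => c^2 * ((fun u => sq2 (p.2 u)) (θ τ))) volume 0 T :=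
        (key_int _ hL2).const_mul _
      have hfe2 : (fun τ => sq2 (ah τ)) = fun τ => c^2 * ((fun u => sq2 (p.2 u)) (θ τ)) := by
        funext τ; simp only [hah, sq2]; ring
      rw [hfe2]; exact hii
  have hreach : yh T = x := by simp only [hyh]; rw [hθT, hyt]
  exact hUn (p.1 s₀) ⟨hS s₀ hs₀, hne⟩ ⟨(yh, ah), hmem, hreach⟩

end Unreach
section ValueUnreach

open intervalIntegral

variable {T ν t : ℝ} {S : Set (ℝ × ℝ)} {l : ℝ × ℝ → ℝ → ℝ} {g : ℝ × ℝ → ℝ}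
  {x z : ℝ × ℝ} {M : ℝ}

lemma lconst_intervalIntegrable
    (hl : ContinuousOn (fun q : (ℝ × ℝ) × ℝ => l q.1 q.2) (S ×ˢ Icc 0 T))
    (ht : 0 ≤ t) (htT : t ≤ T) (hz : z ∈ S) :
    IntervalIntegrable (fun τ => l z τ) volume t T := by
  apply ContinuousOn.intervalIntegrable
  rw [uIcc_of_le htT]
  have hpair : ContinuousOn (fun τ : ℝ => ((z, τ) : (ℝ × ℝ) × ℝ)) (Icc t T) :=
    continuousOn_const.prodMk continuousOn_id
  exact hl.comp hpair fun τ hτ => ⟨hz, ⟨ht.trans hτ.1, hτ.2⟩⟩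

lemma unreachable_value_ge (hT : 0 < T) (hUn : Unreachable ν S T x)
    (hl : ContinuousOn (fun q : (ℝ × ℝ) × ℝ => l q.1 q.2) (S ×ˢ Icc 0 T))
    (ht : 0 ≤ t) (htT : t ≤ T) (hx : x ∈ S) :
    (∫ τ in t..T, l x τ) + g x ≤ valueFun ν S l g T x t := by
  have hne : ((fun p => cost l g t T p.1 p.2) '' Gamma ν S t T x).Nonempty :=
    ⟨_, ⟨_, gamma_const_mem htT hx, rfl⟩⟩
  apply le_csInf hne
  rintro b ⟨p, hp, rfl⟩
  show (∫ τ in t..T, l x τ) + g x ≤ cost l g t T p.1 p.2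
  have hconst := unreachable_traj_const hT hUn htT hp
  have hyT : p.1 T = x := hconst T ⟨htT, le_rfl⟩
  have hcost : cost l g t T p.1 p.2
      = (∫ τ in t..T, (sq2 (p.2 τ) / 2 + l x τ)) + g x := by
    unfold cost
    rw [hyT]
    congr 1
    apply intervalIntegral.integral_congr
    intro τ hτ
    rw [uIcc_of_le htT] at hτ
    simp only [hconst τ hτ]
  rw [hcost, intervalIntegral.integral_add (hp.2.div_const 2)
    (lconst_intervalIntegrable hl ht htT hx)]
  have h0 : 0 ≤ ∫ τ in t..T, sq2 (p.2 τ) / 2 := by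
    apply intervalIntegral.integral_nonneg htT
    intro u _
    have := sq2_nn (p.2 u)
    linarith
  linarith

lemma tendsto_lconst (hSc : IsCompact S)
    (hl : ContinuousOn (fun q : (ℝ × ℝ) × ℝ => l q.1 q.2) (S ×ˢ Icc 0 T))
    (hg : ContinuousOn g S)
    (ht : 0 ≤ t) (htT : t ≤ T) (hx : x ∈ S)
    (z : ℕ → ℝ × ℝ) (hzS : ∀ k, z k ∈ S) (hz : Tendsto z atTop (𝓝 x)) :
    Tendsto (fun k => (∫ τ in t..T, l (z k) τ) + g (z k)) atTop
      (𝓝 ((∫ τ in t..T, l x τ) + g x)) := by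
  have hzw : Tendsto z atTop (𝓝[S] x) :=
    tendsto_nhdsWithin_iff.2 ⟨hz, Eventually.of_forall hzS⟩
  apply Tendsto.add
  · obtain ⟨M, hM0, hMl, _⟩ := exists_bound (le_trans ht htT) hSc hl
      (continuousOn_const (c := (0:ℝ)))
    have hrw : ∀ w : ℝ × ℝ, (∫ τ in t..T, l w τ) = ∫ τ in Ioc t T, l w τ := fun w =>
      intervalIntegral.integral_of_le htT
    simp only [hrw]
    have : Tendsto (fun k => ∫ τ, l (z k) τ ∂(volume.restrict (Ioc t T))) atTop
        (𝓝 (∫ τ, l x τ ∂(volume.restrict (Ioc t T)))) := by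
      apply MeasureTheory.tendsto_integral_of_dominated_convergence (fun _ => M)
      · intro k
        have hc : ContinuousOn (fun τ => l (z k) τ) (Icc t T) := by
          have hpair : ContinuousOn (fun τ : ℝ => ((z k, τ) : (ℝ × ℝ) × ℝ)) (Icc t T) :=
            continuousOn_const.prodMk continuousOn_id
          exact hl.comp hpair fun τ hτ => ⟨hzS k, ⟨ht.trans hτ.1, hτ.2⟩⟩
        exact (hc.mono Ioc_subset_Icc_self).aestronglyMeasurable measurableSet_Ioc
      · exact integrable_const _
      · intro k
        filter_upwards [ae_restrict_mem measurableSet_Ioc] with τ hτ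
        rw [Real.norm_eq_abs]
        exact hMl (z k) (hzS k) τ ⟨ht.trans hτ.1.le, hτ.2⟩
      · filter_upwards [ae_restrict_mem measurableSet_Ioc] with τ hτ
        have hmem : (x, τ) ∈ S ×ˢ Icc (0:ℝ) T := ⟨hx, ⟨ht.trans hτ.1.le, hτ.2⟩⟩
        have hcw : ContinuousWithinAt (fun q : (ℝ × ℝ) × ℝ => l q.1 q.2)
            (S ×ˢ Icc 0 T) (x, τ) := hl _ hmem
        have hseq : Tendsto (fun k => ((z k, τ) : (ℝ × ℝ) × ℝ)) atTop
            (𝓝[S ×ˢ Icc 0 T] (x, τ)) := by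
          apply tendsto_nhdsWithin_iff.2
          constructor
          · exact hz.prodMk_nhds tendsto_const_nhds
          · exact Eventually.of_forall fun k => ⟨hzS k, ⟨ht.trans hτ.1.le, hτ.2⟩⟩
        exact hcw.tendsto.comp hseq
    exact this
  · exact (hg.continuousWithinAt hx).tendsto.comp hzw

end ValueUnreach
section WeakCompact

lemma weak_seq_compact {H : Type*} [NormedAddCommGroup H] [InnerProductSpace ℝ H]
    [CompleteSpace H] [SecondCountableTopology H]
    (f : ℕ → H) (C : ℝ) (hC : ∀ k, ‖f k‖ ≤ C) :
    ∃ (φ : ℕ → ℕ) (a : H), StrictMono φ ∧ ‖a‖ ≤ C ∧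
      ∀ ψ : H, Tendsto (fun k => (inner ℝ (f (φ k)) ψ : ℝ)) atTop (𝓝 (inner ℝ a ψ)) := by
  have hC0 : 0 ≤ C := le_trans (norm_nonneg _) (hC 0)
  obtain ⟨u, hu⟩ := TopologicalSpace.exists_dense_seq H
  haveI : ∀ d : ℕ, CompactSpace (Icc (-(C * ‖u d‖)) (C * ‖u d‖)) := fun d =>
    isCompact_iff_compactSpace.mp isCompact_Icc
  have hmemb : ∀ k d, (inner ℝ (f k) (u d) : ℝ) ∈ Icc (-(C * ‖u d‖)) (C * ‖u d‖) := by
    intro k d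
    have h := abs_real_inner_le_norm (f k) (u d)
    have h2 : |(inner ℝ (f k) (u d) : ℝ)| ≤ C * ‖u d‖ :=
      h.trans (mul_le_mul_of_nonneg_right (hC k) (norm_nonneg _))
    exact abs_le.1 h2
  set F : ℕ → (∀ d : ℕ, Icc (-(C * ‖u d‖)) (C * ‖u d‖)) :=
    fun k d => ⟨inner ℝ (f k) (u d), hmemb k d⟩ with hF
  obtain ⟨G, φ, hφ, hconv⟩ := CompactSpace.tendsto_subseq F
  have hcoord : ∀ d, Tendsto (fun k => (inner ℝ (f (φ k)) (u d) : ℝ)) atTop (𝓝 (G d : ℝ)) := by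
    intro d
    have h1 : Tendsto (fun k => (F ∘ φ) k d) atTop (𝓝 (G d)) := tendsto_pi_nhds.1 hconv d
    exact (continuous_subtype_val.tendsto (G d)).comp h1
  have hcauchy : ∀ ψ : H, ∃ c : ℝ, Tendsto (fun k => (inner ℝ (f (φ k)) ψ : ℝ)) atTop (𝓝 c) := by
    intro ψ
    apply cauchySeq_tendsto_of_complete
    rw [Metric.cauchySeq_iff]
    intro ε hε
    have hC1 : (0:ℝ) < C + 1 := by linarith
    obtain ⟨d, hd⟩ : ∃ d, dist ψ (u d) < ε / (4 * (C + 1)) :=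
      hu.exists_dist_lt ψ (by positivity)
    have hcd : CauchySeq (fun k => (inner ℝ (f (φ k)) (u d) : ℝ)) := (hcoord d).cauchySeq
    rw [Metric.cauchySeq_iff] at hcd
    obtain ⟨N, hN⟩ := hcd (ε / 2) (by linarith)
    refine ⟨N, fun m hm n hn => ?_⟩
    have key : ∀ j, (inner ℝ (f (φ j)) ψ : ℝ)
        = inner ℝ (f (φ j)) (ψ - u d) + inner ℝ (f (φ j)) (u d) := by
      intro j
      rw [inner_sub_right]
      ring
    have hb : ∀ j, |(inner ℝ (f (φ j)) (ψ - u d) : ℝ)| ≤ C * ‖ψ - u d‖ := fun j =>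
      (abs_real_inner_le_norm _ _).trans
        (mul_le_mul_of_nonneg_right (hC _) (norm_nonneg _))
    have hsmall : C * ‖ψ - u d‖ < ε / 4 := by
      have : ‖ψ - u d‖ < ε / (4 * (C + 1)) := by
        rw [← dist_eq_norm]; exact hd
      calc C * ‖ψ - u d‖ ≤ (C + 1) * ‖ψ - u d‖ :=
            mul_le_mul_of_nonneg_right (by linarith) (norm_nonneg _)
        _ < (C + 1) * (ε / (4 * (C + 1))) := by
            apply mul_lt_mul_of_pos_left this hC1
        _ = ε / 4 := by field_simp
    have hmn := hN m hm n hn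
    rw [Real.dist_eq] at hmn ⊢
    rw [key m, key n]
    have h1 := hb m
    have h2 := hb n
    have habs : ∀ A B A' B' : ℝ, |A + B - (A' + B')| ≤ |A| + |A'| + |B - B'| := by
      intro A B A' B'
      have he : A + B - (A' + B') = (A - A') + (B - B') := by ring
      rw [he]
      refine (abs_add_le _ _).trans ?_
      have h2' : |A - A'| ≤ |A| + |A'| := by
        rw [sub_eq_add_neg]
        refine (abs_add_le _ _).trans ?_
        rw [abs_neg]
      linarith
    have hthis := habs (inner ℝ (f (φ m)) (ψ - u d)) (inner ℝ (f (φ m)) (u d))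
      (inner ℝ (f (φ n)) (ψ - u d)) (inner ℝ (f (φ n)) (u d))
    linarith [hthis, h1, h2, hmn]
  choose Lf hLf using hcauchy
  have hadd : ∀ ψ χ : H, Lf (ψ + χ) = Lf ψ + Lf χ := by
    intro ψ χ
    have h1 : Tendsto (fun k => ((inner ℝ (f (φ k)) ψ : ℝ) + inner ℝ (f (φ k)) χ)) atTop
        (𝓝 (Lf ψ + Lf χ)) := (hLf ψ).add (hLf χ)
    have h2 : (fun k => (inner ℝ (f (φ k)) (ψ + χ) : ℝ))
        = fun k => (inner ℝ (f (φ k)) ψ : ℝ) + inner ℝ (f (φ k)) χ := by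
      funext k; exact inner_add_right _ _ _
    exact tendsto_nhds_unique (hLf (ψ + χ)) (h2 ▸ h1)
  have hsmul : ∀ (r : ℝ) (ψ : H), Lf (r • ψ) = r * Lf ψ := by
    intro r ψ
    have h1 : Tendsto (fun k => r * (inner ℝ (f (φ k)) ψ : ℝ)) atTop (𝓝 (r * Lf ψ)) :=
      (hLf ψ).const_mul r
    have h2 : (fun k => (inner ℝ (f (φ k)) (r • ψ) : ℝ))
        = fun k => r * (inner ℝ (f (φ k)) ψ : ℝ) := by
      funext k; rw [real_inner_smul_right]
    exact tendsto_nhds_unique (hLf (r • ψ)) (h2 ▸ h1)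
  have hbound : ∀ ψ, ‖Lf ψ‖ ≤ C * ‖ψ‖ := by
    intro ψ
    rw [Real.norm_eq_abs]
    have hb : ∀ k, |(inner ℝ (f (φ k)) ψ : ℝ)| ≤ C * ‖ψ‖ := fun k =>
      (abs_real_inner_le_norm _ _).trans
        (mul_le_mul_of_nonneg_right (hC _) (norm_nonneg _))
    exact le_of_tendsto (hLf ψ).abs (Eventually.of_forall hb)
  set Llin : H →ₗ[ℝ] ℝ :=
    { toFun := Lf
      map_add' := hadd
      map_smul' := fun r ψ => by simpa using hsmul r ψ } with hLlin
  set Lmap : H →L[ℝ] ℝ := LinearMap.mkContinuous Llin C hbound with hLmap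
  set a : H := (InnerProductSpace.toDual ℝ H).symm Lmap with hadef
  have ha : ∀ ψ, (inner ℝ a ψ : ℝ) = Lf ψ := by
    intro ψ
    have h1 : (InnerProductSpace.toDual ℝ H) a = Lmap :=
      (InnerProductSpace.toDual ℝ H).apply_symm_apply Lmap
    have h2 := InnerProductSpace.toDual_apply_apply (𝕜 := ℝ) (E := H) (x := a) (y := ψ)
    rw [h1] at h2
    exact h2.symm
  have hnorm : ‖a‖ ≤ C := by
    rw [hadef, LinearIsometryEquiv.norm_map, hLmap]
    exact LinearMap.mkContinuous_norm_le _ hC0 _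
  exact ⟨φ, a, hφ, hnorm, fun ψ => (ha ψ) ▸ hLf ψ⟩

end WeakCompact
section Monster

open intervalIntegral

lemma L2_norm_sq {X : Type*} [MeasurableSpace X] {μ : Measure X} (F : Lp ℝ 2 μ) :
    ‖F‖ ^ 2 = ∫ τ, (F : X → ℝ) τ ^ 2 ∂μ := by
  rw [← real_inner_self_eq_norm_sq, MeasureTheory.L2.inner_def]
  apply MeasureTheory.integral_congr_ae
  filter_upwards with τ
  simp only [RCLike.inner_apply, starRingEnd_apply, star_trivial]
  ring

lemma L2_inner_eq {X : Type*} [MeasurableSpace X] {μ : Measure X} (F G : Lp ℝ 2 μ) :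
    (inner ℝ F G : ℝ) = ∫ τ, (F : X → ℝ) τ * (G : X → ℝ) τ ∂μ := by
  rw [MeasureTheory.L2.inner_def]
  apply MeasureTheory.integral_congr_ae
  filter_upwards with τ
  simp only [RCLike.inner_apply, starRingEnd_apply, star_trivial]
  ring

variable {T ν t : ℝ} {S : Set (ℝ × ℝ)} {l : ℝ × ℝ → ℝ → ℝ} {g : ℝ × ℝ → ℝ}
  {x : ℝ × ℝ}

set_option maxHeartbeats 1000000 in
set_option synthInstance.maxHeartbeats 400000 in
lemma gamma_limit (hν : 0 < ν) (hSc : IsCompact S) (hSne : S.Nonempty)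
    (hl : ContinuousOn (fun q : (ℝ × ℝ) × ℝ => l q.1 q.2) (S ×ˢ Icc 0 T))
    (hg : ContinuousOn g S)
    (ht : 0 ≤ t) (htT : t < T) (hx : x ∈ S)
    (z : ℕ → ℝ × ℝ) (hzS : ∀ k, z k ∈ S) (hzx : Tendsto z atTop (𝓝 x))
    (p : ℕ → (ℝ → ℝ × ℝ) × (ℝ → ℝ × ℝ)) (hp : ∀ k, p k ∈ Gamma ν S t T (z k))
    (C : ℝ) (hC : ∀ k, cost l g t T (p k).1 (p k).2 ≤ C) :
    ∃ q ∈ Gamma ν S t T x, cost l g t T q.1 q.2 ≤ C := by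
  set μ : Measure ℝ := volume.restrict (Ioc t T) with hμdef
  haveI : IsFiniteMeasure μ := by
    constructor
    rw [hμdef, Measure.restrict_apply_univ]
    exact measure_Ioc_lt_top
  have hAk : ∀ k, Admissible ν S t T (z k) (p k).1 (p k).2 := fun k => (hp k).1
  have hL2k : ∀ k, InL2 (p k).2 t T := fun k => (hp k).2
  obtain ⟨M, hM0, hMl, hMg⟩ := exists_bound (ht.trans htT.le) hSc hl hg
  -- energy bound
  set CE : ℝ := 2 * (C + M * (T - t) + M) with hCEdef
  have hE_bd : ∀ k, (∫ τ in t..T, sq2 ((p k).2 τ)) ≤ CE := by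
    intro k
    have h := cost_ge ht htT.le hl hMl hMg (hAk k) (hL2k k)
    have h2 := hC k
    rw [hCEdef]; linarith
  have hCE0 : (0:ℝ) ≤ CE := le_trans (int_sq2_nonneg htT.le) (hE_bd 0)
  -- componentwise square integrability
  have hsq2int : ∀ k, Integrable (fun τ => sq2 ((p k).2 τ)) μ := fun k =>
    (intervalIntegrable_iff_integrableOn_Ioc_of_le htT.le).1 (hL2k k)
  have hmeasa : ∀ k, Measurable ((p k).2) := fun k => (hAk k).1
  have h1sq : ∀ k, Integrable (fun τ => (((p k).2 τ).1) ^ 2) μ := by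
    intro k
    apply (hsq2int k).mono
      ((measurable_fst.comp (hmeasa k)).pow_const 2).aestronglyMeasurable
    filter_upwards with τ
    rw [Real.norm_eq_abs, Real.norm_eq_abs, abs_of_nonneg (sq_nonneg _),
      abs_of_nonneg (sq2_nn _)]
    exact sq2_fst_sq_le _
  have h2sq : ∀ k, Integrable (fun τ => (((p k).2 τ).2) ^ 2) μ := by
    intro k
    apply (hsq2int k).mono
      ((measurable_snd.comp (hmeasa k)).pow_const 2).aestronglyMeasurable
    filter_upwards with τ
    rw [Real.norm_eq_abs, Real.norm_eq_abs, abs_of_nonneg (sq_nonneg _),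
      abs_of_nonneg (sq2_nn _)]
    exact sq2_snd_sq_le _
  have hmem1 : ∀ k, MemLp (fun τ => ((p k).2 τ).1) 2 μ := fun k =>
    (memLp_two_iff_integrable_sq
      (measurable_fst.comp (hmeasa k)).aestronglyMeasurable).2 (h1sq k)
  have hmem2 : ∀ k, MemLp (fun τ => ((p k).2 τ).2) 2 μ := fun k =>
    (memLp_two_iff_integrable_sq
      (measurable_snd.comp (hmeasa k)).aestronglyMeasurable).2 (h2sq k)
  set f1 : ℕ → Lp ℝ 2 μ := fun k => (hmem1 k).toLp _ with hf1def
  set f2 : ℕ → Lp ℝ 2 μ := fun k => (hmem2 k).toLp _ with hf2def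
  -- energies
  set E1 : ℕ → ℝ := fun k => ∫ τ, (((p k).2 τ).1) ^ 2 ∂μ with hE1def
  set E2 : ℕ → ℝ := fun k => ∫ τ, (((p k).2 τ).2) ^ 2 ∂μ with hE2def
  have hEsplit : ∀ k, (∫ τ in t..T, sq2 ((p k).2 τ)) = E1 k + E2 k := by
    intro k
    rw [intervalIntegral.integral_of_le htT.le]
    rw [hE1def, hE2def]
    rw [← integral_add (h1sq k) (h2sq k)]
    rfl
  have hE1mem : ∀ k, E1 k ∈ Icc (0:ℝ) CE := by
    intro k
    constructor
    · exact integral_nonneg fun τ => sq_nonneg _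
    · have h2 : E2 k = ∫ τ, (((p k).2 τ).2) ^ 2 ∂μ := rfl
      have h3 : (0:ℝ) ≤ E2 k := integral_nonneg fun τ => sq_nonneg _
      have := hEsplit k
      have := hE_bd k
      linarith
  have hE2mem : ∀ k, E2 k ∈ Icc (0:ℝ) CE := by
    intro k
    constructor
    · exact integral_nonneg fun τ => sq_nonneg _
    · have h3 : (0:ℝ) ≤ E1 k := integral_nonneg fun τ => sq_nonneg _
      have := hEsplit k
      have := hE_bd k
      linarith
  have hnorm1 : ∀ k, ‖f1 k‖ = Real.sqrt (E1 k) := by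
    intro k
    have h := L2_norm_sq (f1 k)
    have h2 : ∫ τ, ((f1 k : ℝ → ℝ) τ) ^ 2 ∂μ = E1 k := by
      apply MeasureTheory.integral_congr_ae
      filter_upwards [(hmem1 k).coeFn_toLp] with τ hτ
      rw [hτ]
    rw [h2] at h
    rw [← h, Real.sqrt_sq (norm_nonneg _)]
  have hnorm2 : ∀ k, ‖f2 k‖ = Real.sqrt (E2 k) := by
    intro k
    have h := L2_norm_sq (f2 k)
    have h2 : ∫ τ, ((f2 k : ℝ → ℝ) τ) ^ 2 ∂μ = E2 k := by
      apply MeasureTheory.integral_congr_ae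
      filter_upwards [(hmem2 k).coeFn_toLp] with τ hτ
      rw [hτ]
    rw [h2] at h
    rw [← h, Real.sqrt_sq (norm_nonneg _)]
  have hnorm1le : ∀ k, ‖f1 k‖ ≤ Real.sqrt CE := fun k => by
    rw [hnorm1 k]; exact Real.sqrt_le_sqrt (hE1mem k).2
  have hnorm2le : ∀ k, ‖f2 k‖ ≤ Real.sqrt CE := fun k => by
    rw [hnorm2 k]; exact Real.sqrt_le_sqrt (hE2mem k).2
  -- extract subsequence with convergent energies
  obtain ⟨e1, he1mem, ρ1, hρ1, hE1conv⟩ :=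
    tendsto_subseq_of_bounded (Metric.isBounded_Icc (0:ℝ) CE) (x := E1) hE1mem
  obtain ⟨e2, he2mem, ρ2, hρ2, hE2conv⟩ :=
    tendsto_subseq_of_bounded (Metric.isBounded_Icc (0:ℝ) CE) (x := fun k => E2 (ρ1 k))
    (fun k => hE2mem _)
  -- weak limits
  haveI hfact1 : Fact ((1:ENNReal) ≤ 2) := ⟨one_le_two⟩
  haveI hfact2 : Fact ((2:ENNReal) ≠ ⊤) := ⟨by norm_num⟩
  haveI : SecondCountableTopology (Lp ℝ 2 μ) := MeasureTheory.Lp.SecondCountableTopology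
  obtain ⟨φ1, a1L, hφ1, hna1, hw1⟩ :=
    weak_seq_compact (fun k => f1 (ρ1 (ρ2 k))) (Real.sqrt CE) (fun k => hnorm1le _)
  obtain ⟨φ2, a2L, hφ2, hna2, hw2⟩ :=
    weak_seq_compact (fun k => f2 (ρ1 (ρ2 (φ1 k)))) (Real.sqrt CE) (fun k => hnorm2le _)
  set κ : ℕ → ℕ := fun j => ρ1 (ρ2 (φ1 (φ2 j))) with hκdef
  have hκmono : StrictMono κ := hρ1.comp (hρ2.comp (hφ1.comp hφ2))
  have hwk1 : ∀ ψ : Lp ℝ 2 μ,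
      Tendsto (fun j => (inner ℝ (f1 (κ j)) ψ : ℝ)) atTop (𝓝 (inner ℝ a1L ψ)) := by
    intro ψ
    exact (hw1 ψ).comp hφ2.tendsto_atTop
  have hwk2 : ∀ ψ : Lp ℝ 2 μ,
      Tendsto (fun j => (inner ℝ (f2 (κ j)) ψ : ℝ)) atTop (𝓝 (inner ℝ a2L ψ)) := hw2
  have hE1κ : Tendsto (fun j => E1 (κ j)) atTop (𝓝 e1) :=
    hE1conv.comp ((hρ2.comp (hφ1.comp hφ2)).tendsto_atTop)
  have hE2κ : Tendsto (fun j => E2 (κ j)) atTop (𝓝 e2) :=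
    hE2conv.comp ((hφ1.comp hφ2).tendsto_atTop)
  -- representatives
  set a1 : ℝ → ℝ := (a1L : ℝ → ℝ) with ha1def
  set a2 : ℝ → ℝ := (a2L : ℝ → ℝ) with ha2def
  have ha1meas : Measurable a1 := (Lp.stronglyMeasurable a1L).measurable
  have ha2meas : Measurable a2 := (Lp.stronglyMeasurable a2L).measurable
  have ha1mem : MemLp a1 2 μ := Lp.memLp a1L
  have ha2mem : MemLp a2 2 μ := Lp.memLp a2L
  have ha1int : Integrable a1 μ := ha1mem.integrable one_le_two
  have ha2int : Integrable a2 μ := ha2mem.integrable one_le_two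
  have ha1sq : Integrable (fun τ => a1 τ ^ 2) μ :=
    (memLp_two_iff_integrable_sq ha1mem.aestronglyMeasurable).1 ha1mem
  have ha2sq : Integrable (fun τ => a2 τ ^ 2) μ :=
    (memLp_two_iff_integrable_sq ha2mem.aestronglyMeasurable).1 ha2mem
  have ha1ii : IntervalIntegrable a1 volume t T :=
    (intervalIntegrable_iff_integrableOn_Ioc_of_le htT.le).2 ha1int
  -- clamp
  set η : ℝ → ℝ := fun s => max t (min s T) with hηdef
  have hηcont : Continuous η := continuous_const.max (continuous_id.min continuous_const)
  have hηmem : ∀ s, η s ∈ Icc t T := fun s =>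
    ⟨le_max_left _ _, max_le htT.le (min_le_right _ _)⟩
  have hηid : ∀ s ∈ Icc t T, η s = s := by
    intro s hs
    rw [hηdef]
    simp only
    rw [min_eq_left hs.2, max_eq_right hs.1]
  set Y1 : ℝ → ℝ := fun s => x.1 + ∫ τ in t..(η s), a1 τ with hY1def
  have hprim1 : ContinuousOn (fun u => ∫ τ in t..u, a1 τ) (Icc t T) := by
    have h := intervalIntegral.continuousOn_primitive_interval (a := t) (b := T) (f := a1)
      (μ := volume) ?_
    · rwa [uIcc_of_le htT.le] at h
    · rw [uIcc_of_le htT.le, integrableOn_Icc_iff_integrableOn_Ioc]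
      exact ha1int
  have hY1cont : Continuous Y1 := by
    apply continuous_const.add
    exact hprim1.comp_continuous hηcont hηmem
  have habsν : Continuous fun r : ℝ => |r| ^ ν := by
    rw [continuous_iff_continuousAt]
    intro r
    exact (Real.continuousAt_rpow_const _ _ (Or.inr hν.le)).comp continuous_abs.continuousAt
  set W : ℝ → ℝ := fun τ => |Y1 τ| ^ ν with hWdef
  have hWcont : Continuous W := habsν.comp hY1cont
  -- bound on S
  obtain ⟨R, hR⟩ := hSc.exists_bound_of_continuousOn (continuous_fst.continuousOn)
  have hR0 : 0 ≤ R := le_trans (norm_nonneg _) (hR _ hSne.choose_spec)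
  -- indicator tests
  have hfin : ∀ s : ℝ, μ (Ioc t s) ≠ ⊤ := fun s => measure_ne_top μ _
  set ind : ℝ → Lp ℝ 2 μ := fun s =>
    indicatorConstLp 2 measurableSet_Ioc (hfin s) (1:ℝ) with hinddef
  have hrestr : ∀ s ∈ Icc t T, μ.restrict (Ioc t s) = volume.restrict (Ioc t s) := by
    intro s hs
    rw [hμdef, Measure.restrict_restrict measurableSet_Ioc]
    congr 1
    exact inter_eq_left.2 (Ioc_subset_Ioc le_rfl hs.2)
  have hinner_ind : ∀ s ∈ Icc t T, ∀ F : Lp ℝ 2 μ,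
      (inner ℝ (ind s) F : ℝ) = ∫ τ in t..s, (F : ℝ → ℝ) τ := by
    intro s hs F
    rw [hinddef]
    rw [MeasureTheory.L2.inner_indicatorConstLp_eq_setIntegral_inner ℝ F
      measurableSet_Ioc (1:ℝ) (hfin s)]
    rw [intervalIntegral.integral_of_le hs.1]
    rw [hrestr s hs]
    apply MeasureTheory.integral_congr_ae
    filter_upwards with τ
    simp only [RCLike.inner_apply, starRingEnd_apply, star_trivial, one_mul, mul_one]
  have hint_congr : ∀ s ∈ Icc t T, ∀ (f : ℝ → ℝ) (hfm : MemLp f 2 μ),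
      (∫ τ in t..s, ((hfm.toLp f : Lp ℝ 2 μ) : ℝ → ℝ) τ) = ∫ τ in t..s, f τ := by
    intro s hs f hfm
    rw [intervalIntegral.integral_of_le hs.1, intervalIntegral.integral_of_le hs.1]
    apply MeasureTheory.integral_congr_ae
    have h2 := ae_restrict_of_ae (μ := μ) (s := Ioc t s) hfm.coeFn_toLp
    rwa [hrestr s hs] at h2
  -- component-1 pointwise limits
  have hy1lim : ∀ s ∈ Icc t T,
      Tendsto (fun j => (((p (κ j)).1 s).1 : ℝ)) atTop (𝓝 (Y1 s)) := by
    intro s hs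
    have he1 : ∀ k, ((p k).1 s).1 = (z k).1 + ∫ τ in t..s, ((p k).2 τ).1 :=
      fun k => (hAk k).2.2.2.1 s hs
    have hz1 : Tendsto (fun j => (z (κ j)).1) atTop (𝓝 x.1) :=
      (continuous_fst.tendsto x).comp (hzx.comp hκmono.tendsto_atTop)
    have hintlim : Tendsto (fun j => ∫ τ in t..s, ((p (κ j)).2 τ).1) atTop
        (𝓝 (∫ τ in t..s, a1 τ)) := by
      have h := hwk1 (ind s)
      have hcoe : ∀ k, (inner ℝ (f1 k) (ind s) : ℝ) = ∫ τ in t..s, ((p k).2 τ).1 := by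
        intro k
        rw [real_inner_comm, hinner_ind s hs (f1 k)]
        exact hint_congr s hs _ (hmem1 k)
      have hcoea : (inner ℝ a1L (ind s) : ℝ) = ∫ τ in t..s, a1 τ := by
        rw [real_inner_comm, hinner_ind s hs a1L]
      rw [← hcoea]
      exact Tendsto.congr (fun j => hcoe (κ j)) h
    have hsum : Tendsto (fun j => (z (κ j)).1 + ∫ τ in t..s, ((p (κ j)).2 τ).1) atTop
        (𝓝 (x.1 + ∫ τ in t..s, a1 τ)) := hz1.add hintlim
    have hYs : Y1 s = x.1 + ∫ τ in t..s, a1 τ := by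
      rw [hY1def]; simp only; rw [hηid s hs]
    rw [hYs]
    exact Tendsto.congr (fun j => (he1 (κ j)).symm) hsum
  -- bounds
  have hY1bdIcc : ∀ s ∈ Icc t T, |Y1 s| ≤ R := by
    intro s hs
    have hb : ∀ j, |(((p (κ j)).1 s).1 : ℝ)| ≤ R := by
      intro j
      have hyS := (hAk (κ j)).2.2.2.2.2 s hs
      have h := hR _ hyS
      rwa [Real.norm_eq_abs] at h
    exact le_of_tendsto (hy1lim s hs).abs (Eventually.of_forall hb)
  have hY1bd : ∀ s, |Y1 s| ≤ R := by
    intro s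
    have hYeq : Y1 s = Y1 (η s) := by
      rw [hY1def]; simp only; rw [hηid (η s) (hηmem s)]
    rw [hYeq]
    exact hY1bdIcc (η s) (hηmem s)
  have hWbd : ∀ s, |W s| ≤ R ^ ν := by
    intro s
    rw [hWdef]; simp only
    rw [abs_of_nonneg (Real.rpow_nonneg (abs_nonneg _) _)]
    exact Real.rpow_le_rpow (abs_nonneg _) (hY1bd s) hν.le
  -- truncated weights along the sequence
  set w : ℕ → ℝ → ℝ := fun k τ => |((p k).1 (η τ)).1| ^ ν with hwdef
  have hwcont : ∀ k, Continuous (w k) := by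
    intro k
    have hy : ContinuousOn ((p k).1) (Icc t T) := adm_continuousOn htT.le (hAk k)
    have h1 : Continuous fun τ => (p k).1 (η τ) := hy.comp_continuous hηcont hηmem
    exact habsν.comp (continuous_fst.comp h1)
  have hwbd : ∀ k τ, |w k τ| ≤ R ^ ν := by
    intro k τ
    rw [hwdef]; simp only
    rw [abs_of_nonneg (Real.rpow_nonneg (abs_nonneg _) _)]
    apply Real.rpow_le_rpow (abs_nonneg _) ?_ hν.le
    have h := hR _ ((hAk k).2.2.2.2.2 (η τ) (hηmem τ))
    rwa [Real.norm_eq_abs] at h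
  have hweq : ∀ k, ∀ τ ∈ Icc t T, w k τ = |((p k).1 τ).1| ^ ν := by
    intro k τ hτ
    rw [hwdef]; simp only; rw [hηid τ hτ]
  have hwlim : ∀ τ ∈ Icc t T, Tendsto (fun j => w (κ j) τ) atTop (𝓝 (W τ)) := by
    intro τ hτ
    have h := (habsν.tendsto (Y1 τ)).comp (hy1lim τ hτ)
    apply h.congr
    intro j
    simp only [Function.comp_apply]
    rw [hweq (κ j) τ hτ]
  have hWaesm : AEStronglyMeasurable W μ := hWcont.aestronglyMeasurable
  have habs_sub : ∀ A B : ℝ, |A - B| ≤ |A| + |B| := by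
    intro A B
    rw [sub_eq_add_neg]
    refine (abs_add_le _ _).trans ?_
    rw [abs_neg]
  have hwWaesm : ∀ k, AEStronglyMeasurable (fun τ => w k τ - W τ) μ := fun k =>
    ((hwcont k).sub hWcont).aestronglyMeasurable
  have hwWbd : ∀ k τ, |w k τ - W τ| ≤ 2 * R ^ ν := by
    intro k τ
    have h1 := hwbd k τ
    have h2 := hWbd τ
    have := habs_sub (w k τ) (W τ)
    linarith
  have hDint : ∀ k, Integrable (fun τ => (w k τ - W τ) ^ 2) μ := by
    intro k
    have hmemwk : MemLp (fun τ => w k τ - W τ) 2 μ := by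
      apply MemLp.of_bound (hwWaesm k) (2 * R ^ ν)
      filter_upwards with τ
      rw [Real.norm_eq_abs]
      exact hwWbd k τ
    exact (memLp_two_iff_integrable_sq (hwWaesm k)).1 hmemwk
  set D : ℕ → ℝ := fun j => ∫ τ, (w (κ j) τ - W τ) ^ 2 ∂μ with hDdef
  have hDlim : Tendsto D atTop (𝓝 0) := by
    have h0 : (0:ℝ) = ∫ τ, (0:ℝ) ∂μ := by simp
    rw [hDdef, h0]
    apply MeasureTheory.tendsto_integral_of_dominated_convergence
      (fun _ => (2 * R ^ ν) ^ 2)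
    · intro j; exact (hDint (κ j)).aestronglyMeasurable
    · exact integrable_const _
    · intro j
      filter_upwards with τ
      rw [Real.norm_eq_abs, abs_of_nonneg (sq_nonneg _), ← sq_abs]
      have := hwWbd (κ j) τ
      have h2 : (0:ℝ) ≤ |w (κ j) τ - W τ| := abs_nonneg _
      nlinarith
    · filter_upwards [ae_restrict_mem measurableSet_Ioc] with τ hτ
      have h1 := hwlim τ (Ioc_subset_Icc_self hτ)
      have h2 : Tendsto (fun j => w (κ j) τ - W τ) atTop (𝓝 0) := by
        have := h1.sub (tendsto_const_nhds (x := W τ))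
        simpa using this
      have h3 := h2.pow 2
      simpa using h3
  have hD0 : ∀ j, 0 ≤ D j := fun j => integral_nonneg fun τ => sq_nonneg _
  -- Ψ tests
  have hmemWs : ∀ s : ℝ, MemLp ((Ioc t s).indicator W) 2 μ := by
    intro s
    apply MemLp.of_bound (hWaesm.indicator measurableSet_Ioc) (R ^ ν)
    filter_upwards with τ
    rw [Real.norm_eq_abs]
    classical
    by_cases hmem : τ ∈ Ioc t s
    · rw [Set.indicator_of_mem hmem]; exact hWbd τ
    · rw [Set.indicator_of_notMem hmem, abs_zero]
      exact Real.rpow_nonneg hR0 _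
  set Ψ : ℝ → Lp ℝ 2 μ := fun s => (hmemWs s).toLp _ with hΨdef
  have hinner_Ψ : ∀ s ∈ Icc t T, ∀ F : Lp ℝ 2 μ,
      (inner ℝ (Ψ s) F : ℝ) = ∫ τ in t..s, W τ * (F : ℝ → ℝ) τ := by
    intro s hs F
    rw [hΨdef]
    rw [L2_inner_eq]
    have hstep1 : ∫ τ, (((hmemWs s).toLp _ : Lp ℝ 2 μ) : ℝ → ℝ) τ * (F : ℝ → ℝ) τ ∂μ
        = ∫ τ, (Ioc t s).indicator W τ * (F : ℝ → ℝ) τ ∂μ := by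
      apply MeasureTheory.integral_congr_ae
      filter_upwards [(hmemWs s).coeFn_toLp] with τ hτ
      rw [hτ]
    rw [hstep1]
    have hstep2 : ∫ τ, (Ioc t s).indicator W τ * (F : ℝ → ℝ) τ ∂μ
        = ∫ τ, (Ioc t s).indicator (fun τ => W τ * (F : ℝ → ℝ) τ) τ ∂μ := by
      apply MeasureTheory.integral_congr_ae
      filter_upwards with τ
      classical
      by_cases hmem : τ ∈ Ioc t s
      · rw [Set.indicator_of_mem hmem, Set.indicator_of_mem hmem]
      · rw [Set.indicator_of_notMem hmem, Set.indicator_of_notMem hmem, zero_mul]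
    rw [hstep2, MeasureTheory.integral_indicator measurableSet_Ioc]
    rw [hrestr s hs, intervalIntegral.integral_of_le hs.1]
  -- T2 convergence
  have hT2 : ∀ s ∈ Icc t T, Tendsto (fun j => ∫ τ in t..s, W τ * ((p (κ j)).2 τ).2)
      atTop (𝓝 (∫ τ in t..s, W τ * a2 τ)) := by
    intro s hs
    have h := hwk2 (Ψ s)
    have hc1 : ∀ k, (inner ℝ (f2 k) (Ψ s) : ℝ) = ∫ τ in t..s, W τ * ((p k).2 τ).2 := by
      intro k
      rw [real_inner_comm, hinner_Ψ s hs (f2 k)]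
      rw [intervalIntegral.integral_of_le hs.1, intervalIntegral.integral_of_le hs.1]
      apply MeasureTheory.integral_congr_ae
      have h2 := ae_restrict_of_ae (μ := μ) (s := Ioc t s) (hmem2 k).coeFn_toLp
      rw [hrestr s hs] at h2
      filter_upwards [h2] with τ hτ
      rw [hτ]
    have hca : (inner ℝ a2L (Ψ s) : ℝ) = ∫ τ in t..s, W τ * a2 τ := by
      rw [real_inner_comm, hinner_Ψ s hs a2L]
    rw [← hca]
    exact Tendsto.congr (fun j => hc1 (κ j)) h
  -- T1 bound via Cauchy-Schwarz
  have hmemdiff : ∀ k (s : ℝ), MemLp ((Ioc t s).indicator (fun τ => w k τ - W τ)) 2 μ := by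
    intro k s
    apply MemLp.of_bound ((hwWaesm k).indicator measurableSet_Ioc) (2 * R ^ ν)
    filter_upwards with τ
    rw [Real.norm_eq_abs]
    classical
    by_cases hmem : τ ∈ Ioc t s
    · rw [Set.indicator_of_mem hmem]; exact hwWbd k τ
    · rw [Set.indicator_of_notMem hmem, abs_zero]
      have := Real.rpow_nonneg hR0 ν
      linarith
  have hT1bound : ∀ j (s : ℝ), s ∈ Icc t T →
      |∫ τ in t..s, (w (κ j) τ - W τ) * ((p (κ j)).2 τ).2|
        ≤ Real.sqrt (D j) * Real.sqrt CE := by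
    intro j s hs
    set d : Lp ℝ 2 μ := (hmemdiff (κ j) s).toLp _ with hddef
    have hid : (inner ℝ d (f2 (κ j)) : ℝ)
        = ∫ τ in t..s, (w (κ j) τ - W τ) * ((p (κ j)).2 τ).2 := by
      rw [hddef, L2_inner_eq]
      have hstep1 : ∫ τ, (((hmemdiff (κ j) s).toLp _ : Lp ℝ 2 μ) : ℝ → ℝ) τ
            * ((f2 (κ j) : Lp ℝ 2 μ) : ℝ → ℝ) τ ∂μ
          = ∫ τ, (Ioc t s).indicator (fun τ => w (κ j) τ - W τ) τ
            * ((p (κ j)).2 τ).2 ∂μ := by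
        apply MeasureTheory.integral_congr_ae
        filter_upwards [(hmemdiff (κ j) s).coeFn_toLp, (hmem2 (κ j)).coeFn_toLp]
          with τ h1 h2
        rw [h1, h2]
      rw [hstep1]
      have hstep2 : ∫ τ, (Ioc t s).indicator (fun τ => w (κ j) τ - W τ) τ
            * ((p (κ j)).2 τ).2 ∂μ
          = ∫ τ, (Ioc t s).indicator
            (fun τ => (w (κ j) τ - W τ) * ((p (κ j)).2 τ).2) τ ∂μ := by
        apply MeasureTheory.integral_congr_ae
        filter_upwards with τ
        classical
        by_cases hmem : τ ∈ Ioc t s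
        · rw [Set.indicator_of_mem hmem, Set.indicator_of_mem hmem]
        · rw [Set.indicator_of_notMem hmem, Set.indicator_of_notMem hmem, zero_mul]
      rw [hstep2, MeasureTheory.integral_indicator measurableSet_Ioc]
      rw [hrestr s hs, intervalIntegral.integral_of_le hs.1]
    have habsle := abs_real_inner_le_norm d (f2 (κ j))
    have hnd : ‖d‖ ≤ Real.sqrt (D j) := by
      have h1 : ‖d‖ ^ 2 = ∫ τ, ((Ioc t s).indicator (fun τ => w (κ j) τ - W τ) τ) ^ 2 ∂μ := by
        rw [hddef, L2_norm_sq]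
        apply MeasureTheory.integral_congr_ae
        filter_upwards [(hmemdiff (κ j) s).coeFn_toLp] with τ hτ
        rw [hτ]
      have hindint : Integrable
          (fun τ => ((Ioc t s).indicator (fun τ => w (κ j) τ - W τ) τ) ^ 2) μ :=
        (memLp_two_iff_integrable_sq
          ((hwWaesm (κ j)).indicator measurableSet_Ioc)).1 (hmemdiff (κ j) s)
      have h2 : ∫ τ, ((Ioc t s).indicator (fun τ => w (κ j) τ - W τ) τ) ^ 2 ∂μ ≤ D j := by
        rw [hDdef]
        apply integral_mono hindint (hDint (κ j))
        intro τ
        show ((Ioc t s).indicator (fun τ => w (κ j) τ - W τ) τ) ^ 2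
          ≤ (w (κ j) τ - W τ) ^ 2
        classical
        by_cases hmem : τ ∈ Ioc t s
        · rw [Set.indicator_of_mem hmem]
        · rw [Set.indicator_of_notMem hmem]
          simpa using sq_nonneg (w (κ j) τ - W τ)
      calc ‖d‖ = Real.sqrt (‖d‖ ^ 2) := (Real.sqrt_sq (norm_nonneg _)).symm
        _ ≤ Real.sqrt (D j) := Real.sqrt_le_sqrt (by rw [h1]; exact h2)
    calc |∫ τ in t..s, (w (κ j) τ - W τ) * ((p (κ j)).2 τ).2|
        = |(inner ℝ d (f2 (κ j)) : ℝ)| := by rw [hid]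
      _ ≤ ‖d‖ * ‖f2 (κ j)‖ := habsle
      _ ≤ Real.sqrt (D j) * Real.sqrt CE :=
          mul_le_mul hnd (hnorm2le _) (norm_nonneg _) (Real.sqrt_nonneg _)
  -- integrability of products
  have hα2int : ∀ k, Integrable (fun τ => ((p k).2 τ).2) μ := fun k =>
    (hmem2 k).integrable one_le_two
  have hWα2ii : IntervalIntegrable (fun τ => W τ * a2 τ) volume t T := by
    rw [intervalIntegrable_iff_integrableOn_Ioc_of_le htT.le]
    exact ha2int.bdd_mul hWaesm (c := R ^ ν) (Eventually.of_forall fun τ => by rw [Real.norm_eq_abs]; exact hWbd τ)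
  have hWα2kii : ∀ k, IntervalIntegrable (fun τ => W τ * ((p k).2 τ).2) volume t T := by
    intro k
    rw [intervalIntegrable_iff_integrableOn_Ioc_of_le htT.le]
    exact (hα2int k).bdd_mul hWaesm (c := R ^ ν) (Eventually.of_forall fun τ => by rw [Real.norm_eq_abs]; exact hWbd τ)
  have hwWα2kii : ∀ k, IntervalIntegrable
      (fun τ => (w k τ - W τ) * ((p k).2 τ).2) volume t T := by
    intro k
    rw [intervalIntegrable_iff_integrableOn_Ioc_of_le htT.le]
    exact (hα2int k).bdd_mul (hwWaesm k)
      (c := 2 * R ^ ν) (Eventually.of_forall fun τ => by rw [Real.norm_eq_abs]; exact hwWbd k τ)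
  -- component-2 pointwise limits
  set Y2 : ℝ → ℝ := fun s => x.2 + ∫ τ in t..(η s), W τ * a2 τ with hY2def
  have hy2lim : ∀ s ∈ Icc t T,
      Tendsto (fun j => (((p (κ j)).1 s).2 : ℝ)) atTop (𝓝 (Y2 s)) := by
    intro s hs
    have he2 : ∀ k, ((p k).1 s).2
        = (z k).2 + ∫ τ in t..s, |((p k).1 τ).1| ^ ν * ((p k).2 τ).2 :=
      fun k => (hAk k).2.2.2.2.1 s hs
    have hz2 : Tendsto (fun j => (z (κ j)).2) atTop (𝓝 x.2) :=
      (continuous_snd.tendsto x).comp (hzx.comp hκmono.tendsto_atTop)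
    have hsplit : ∀ k, (∫ τ in t..s, |((p k).1 τ).1| ^ ν * ((p k).2 τ).2)
        = (∫ τ in t..s, (w k τ - W τ) * ((p k).2 τ).2)
          + ∫ τ in t..s, W τ * ((p k).2 τ).2 := by
      intro k
      rw [← intervalIntegral.integral_add
        ((hwWα2kii k).mono_set (by
          rw [uIcc_of_le htT.le, uIcc_of_le hs.1]
          exact Icc_subset_Icc le_rfl hs.2))
        ((hWα2kii k).mono_set (by
          rw [uIcc_of_le htT.le, uIcc_of_le hs.1]
          exact Icc_subset_Icc le_rfl hs.2))]
      apply intervalIntegral.integral_congr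
      intro τ hτ
      rw [uIcc_of_le hs.1] at hτ
      show |((p k).1 τ).1| ^ ν * ((p k).2 τ).2
        = (w k τ - W τ) * ((p k).2 τ).2 + W τ * ((p k).2 τ).2
      rw [hweq k τ (Icc_subset_Icc le_rfl hs.2 hτ)]
      ring
    have hT1lim : Tendsto (fun j => ∫ τ in t..s, (w (κ j) τ - W τ) * ((p (κ j)).2 τ).2)
        atTop (𝓝 0) := by
      apply squeeze_zero_norm (fun j => hT1bound j s hs)
      have hsq : Tendsto (fun j => Real.sqrt (D j)) atTop (𝓝 0) := by
        have h := (Real.continuous_sqrt.tendsto 0).comp hDlim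
        simpa [Function.comp_def] using h
      have := hsq.mul_const (Real.sqrt CE)
      simpa using this
    have hlim2 : Tendsto (fun j => (∫ τ in t..s, (w (κ j) τ - W τ) * ((p (κ j)).2 τ).2)
        + ∫ τ in t..s, W τ * ((p (κ j)).2 τ).2) atTop
        (𝓝 (0 + ∫ τ in t..s, W τ * a2 τ)) := hT1lim.add (hT2 s hs)
    rw [zero_add] at hlim2
    have hsum := hz2.add hlim2
    have hYs : Y2 s = x.2 + ∫ τ in t..s, W τ * a2 τ := by
      rw [hY2def]; simp only; rw [hηid s hs]
    rw [hYs]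
    apply Tendsto.congr ?_ hsum
    intro j
    rw [he2 (κ j), hsplit (κ j)]
  -- the limit trajectory
  set Y : ℝ → ℝ × ℝ := fun s => (Y1 s, Y2 s) with hYdef
  have hylim : ∀ s ∈ Icc t T, Tendsto (fun j => (p (κ j)).1 s) atTop (𝓝 (Y s)) := by
    intro s hs
    have h := (hy1lim s hs).prodMk_nhds (hy2lim s hs)
    exact h
  have hYS : ∀ s ∈ Icc t T, Y s ∈ S := by
    intro s hs
    exact hSc.isClosed.mem_of_tendsto (hylim s hs)
      (Eventually.of_forall fun j => (hAk (κ j)).2.2.2.2.2 s hs)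
  -- the limit control
  set A : ℝ → ℝ × ℝ := fun τ => (a1 τ, a2 τ) with hAdef
  have hQadm : Admissible ν S t T x Y A := by
    refine ⟨ha1meas.prod ha2meas, ?_, ?_, ?_, ?_, hYS⟩
    · exact ha1ii
    · show IntervalIntegrable (fun τ => |(Y τ).1| ^ ν * (A τ).2) volume t T
      have heq : (fun τ => |(Y τ).1| ^ ν * (A τ).2) = fun τ => W τ * a2 τ := rfl
      rw [heq]; exact hWα2ii
    · intro s hs
      show Y1 s = x.1 + ∫ τ in t..s, a1 τ
      rw [hY1def]; simp only; rw [hηid s hs]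
    · intro s hs
      show Y2 s = x.2 + ∫ τ in t..s, W τ * a2 τ
      rw [hY2def]; simp only; rw [hηid s hs]
  have hQL2 : InL2 A t T := by
    unfold InL2
    have heq : (fun τ => sq2 (A τ)) = fun τ => a1 τ ^ 2 + a2 τ ^ 2 := rfl
    rw [heq, intervalIntegrable_iff_integrableOn_Ioc_of_le htT.le]
    exact ha1sq.add ha2sq
  -- energy lower semicontinuity
  have he1' : e1 ∈ Icc (0:ℝ) CE := by rwa [IsClosed.closure_eq isClosed_Icc] at he1mem
  have he2' : e2 ∈ Icc (0:ℝ) CE := by rwa [IsClosed.closure_eq isClosed_Icc] at he2mem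
  have hlsc1 : ∫ τ, a1 τ ^ 2 ∂μ ≤ e1 := by
    have hip := hwk1 a1L
    have hb : ∀ j, (inner ℝ (f1 (κ j)) a1L : ℝ) ≤ Real.sqrt (E1 (κ j)) * ‖a1L‖ := by
      intro j
      have h := (le_abs_self _).trans (abs_real_inner_le_norm (f1 (κ j)) a1L)
      rwa [hnorm1 (κ j)] at h
    have hsq : Tendsto (fun j => Real.sqrt (E1 (κ j)) * ‖a1L‖) atTop
        (𝓝 (Real.sqrt e1 * ‖a1L‖)) := by
      have h := (Real.continuous_sqrt.tendsto e1).comp hE1κ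
      exact h.mul_const _
    have hle : (inner ℝ a1L a1L : ℝ) ≤ Real.sqrt e1 * ‖a1L‖ :=
      le_of_tendsto_of_tendsto' hip hsq hb
    have hn2 : ‖a1L‖ ^ 2 ≤ Real.sqrt e1 * ‖a1L‖ := by
      rw [← real_inner_self_eq_norm_sq]; exact hle
    have hnle : ‖a1L‖ ≤ Real.sqrt e1 := by
      by_contra hcon
      push_neg at hcon
      have hpos : 0 < ‖a1L‖ := lt_of_le_of_lt (Real.sqrt_nonneg _) hcon
      nlinarith [hn2]
    have hnorm_eq : ‖a1L‖ ^ 2 = ∫ τ, a1 τ ^ 2 ∂μ := L2_norm_sq a1L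
    calc ∫ τ, a1 τ ^ 2 ∂μ = ‖a1L‖ ^ 2 := hnorm_eq.symm
      _ ≤ Real.sqrt e1 ^ 2 := pow_le_pow_left₀ (norm_nonneg _) hnle 2
      _ = e1 := Real.sq_sqrt he1'.1
  have hlsc2 : ∫ τ, a2 τ ^ 2 ∂μ ≤ e2 := by
    have hip := hwk2 a2L
    have hb : ∀ j, (inner ℝ (f2 (κ j)) a2L : ℝ) ≤ Real.sqrt (E2 (κ j)) * ‖a2L‖ := by
      intro j
      have h := (le_abs_self _).trans (abs_real_inner_le_norm (f2 (κ j)) a2L)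
      rwa [hnorm2 (κ j)] at h
    have hsq : Tendsto (fun j => Real.sqrt (E2 (κ j)) * ‖a2L‖) atTop
        (𝓝 (Real.sqrt e2 * ‖a2L‖)) := by
      have h := (Real.continuous_sqrt.tendsto e2).comp hE2κ
      exact h.mul_const _
    have hle : (inner ℝ a2L a2L : ℝ) ≤ Real.sqrt e2 * ‖a2L‖ :=
      le_of_tendsto_of_tendsto' hip hsq hb
    have hn2 : ‖a2L‖ ^ 2 ≤ Real.sqrt e2 * ‖a2L‖ := by
      rw [← real_inner_self_eq_norm_sq]; exact hle
    have hnle : ‖a2L‖ ≤ Real.sqrt e2 := by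
      by_contra hcon
      push_neg at hcon
      have hpos : 0 < ‖a2L‖ := lt_of_le_of_lt (Real.sqrt_nonneg _) hcon
      nlinarith [hn2]
    have hnorm_eq : ‖a2L‖ ^ 2 = ∫ τ, a2 τ ^ 2 ∂μ := L2_norm_sq a2L
    calc ∫ τ, a2 τ ^ 2 ∂μ = ‖a2L‖ ^ 2 := hnorm_eq.symm
      _ ≤ Real.sqrt e2 ^ 2 := pow_le_pow_left₀ (norm_nonneg _) hnle 2
      _ = e2 := Real.sq_sqrt he2'.1
  have hsq2A : (∫ τ in t..T, sq2 (A τ)) = (∫ τ, a1 τ ^ 2 ∂μ) + ∫ τ, a2 τ ^ 2 ∂μ := by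
    rw [intervalIntegral.integral_of_le htT.le]
    rw [← integral_add ha1sq ha2sq]
    rfl
  -- l-term and g-term convergence
  have hLlim : Tendsto (fun j => ∫ τ in t..T, l ((p (κ j)).1 τ) τ) atTop
      (𝓝 (∫ τ in t..T, l (Y τ) τ)) := by
    have hrw1 : (fun j => ∫ τ in t..T, l ((p (κ j)).1 τ) τ)
        = fun j => ∫ τ, l ((p (κ j)).1 τ) τ ∂μ := by
      funext j; exact intervalIntegral.integral_of_le htT.le
    rw [hrw1, intervalIntegral.integral_of_le htT.le]
    apply MeasureTheory.tendsto_integral_of_dominated_convergence (fun _ => M)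
    · intro j
      exact ((l_cont_comp hl ht (adm_continuousOn htT.le (hAk (κ j)))
        (hAk (κ j)).2.2.2.2.2).mono Ioc_subset_Icc_self).aestronglyMeasurable
        measurableSet_Ioc
    · exact integrable_const _
    · intro j
      filter_upwards [ae_restrict_mem measurableSet_Ioc] with τ hτ
      rw [Real.norm_eq_abs]
      exact hMl _ ((hAk (κ j)).2.2.2.2.2 τ (Ioc_subset_Icc_self hτ))
        τ ⟨ht.trans hτ.1.le, hτ.2⟩
    · filter_upwards [ae_restrict_mem measurableSet_Ioc] with τ hτ
      have hτI : τ ∈ Icc t T := Ioc_subset_Icc_self hτ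
      have hmemYτ : ((Y τ, τ) : (ℝ × ℝ) × ℝ) ∈ S ×ˢ Icc (0:ℝ) T :=
        ⟨hYS τ hτI, ⟨ht.trans hτI.1, hτI.2⟩⟩
      have hcw := hl _ hmemYτ
      have hseq : Tendsto (fun j => (((p (κ j)).1 τ, τ) : (ℝ × ℝ) × ℝ)) atTop
          (𝓝[S ×ˢ Icc 0 T] (Y τ, τ)) := by
        apply tendsto_nhdsWithin_iff.2
        refine ⟨(hylim τ hτI).prodMk_nhds tendsto_const_nhds, ?_⟩
        exact Eventually.of_forall fun j =>
          ⟨(hAk (κ j)).2.2.2.2.2 τ hτI, ⟨ht.trans hτI.1, hτI.2⟩⟩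
      exact hcw.tendsto.comp hseq
  have hgYlim : Tendsto (fun j => g ((p (κ j)).1 T)) atTop (𝓝 (g (Y T))) := by
    have hYT : Y T ∈ S := hYS T ⟨htT.le, le_rfl⟩
    have hcw := hg.continuousWithinAt hYT
    apply hcw.tendsto.comp
    apply tendsto_nhdsWithin_iff.2
    exact ⟨hylim T ⟨htT.le, le_rfl⟩,
      Eventually.of_forall fun j => (hAk (κ j)).2.2.2.2.2 T ⟨htT.le, le_rfl⟩⟩
  have hcost_each : ∀ j, cost l g t T (p (κ j)).1 (p (κ j)).2
      = (E1 (κ j) + E2 (κ j)) / 2 + (∫ τ in t..T, l ((p (κ j)).1 τ) τ)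
        + g ((p (κ j)).1 T) := by
    intro j
    rw [cost_decomp ht htT.le hl (hAk (κ j)) (hL2k (κ j)), hEsplit (κ j)]
  have hcost_lim : Tendsto (fun j => cost l g t T (p (κ j)).1 (p (κ j)).2) atTop
      (𝓝 ((e1 + e2) / 2 + (∫ τ in t..T, l (Y τ) τ) + g (Y T))) := by
    have h := (((hE1κ.add hE2κ).div_const 2).add hLlim).add hgYlim
    apply Tendsto.congr ?_ h
    intro j
    rw [hcost_each j]
  have hClimle : (e1 + e2) / 2 + (∫ τ in t..T, l (Y τ) τ) + g (Y T) ≤ C :=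
    le_of_tendsto hcost_lim (Eventually.of_forall fun j => hC (κ j))
  refine ⟨(Y, A), ⟨hQadm, hQL2⟩, ?_⟩
  have hq := cost_decomp (g := g) (z := x) ht htT.le hl hQadm hQL2
  rw [hq, hsq2A]
  linarith [hlsc1, hlsc2]

end Monster
/-- if either the approximation property holds at `x` for every initial time,
or `x` is unreachable, then `u(·,t)` is continuous at `x` for every `t ∈ [0,T]`. -/
theorem value_continuous_at_point
    (T ν : ℝ) (hT : 0 < T) (hν : 0 < ν)
    (S : Set (ℝ × ℝ)) (hSc : IsCompact S) (hSne : S.Nonempty)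
    (l : ℝ × ℝ → ℝ → ℝ) (g : ℝ × ℝ → ℝ)
    (hl : ContinuousOn (fun q : (ℝ × ℝ) × ℝ => l q.1 q.2) (S ×ˢ Icc 0 T))
    (hg : ContinuousOn g S)
    (x : ℝ × ℝ) (hx : x ∈ S)
    (hyp : (∀ t ∈ Ico (0 : ℝ) T, ApproxProperty ν S l g t T x) ∨ Unreachable ν S T x) :
    ∀ t ∈ Icc (0 : ℝ) T,
      ContinuousWithinAt (fun z => valueFun ν S l g T z t) S x := by
  intro t htmem
  obtain ⟨ht0, htT⟩ := htmem
  obtain ⟨M, hM0, hMl, hMg⟩ := exists_bound hT.le hSc hl hg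
  rcases eq_or_lt_of_le htT with heq | htT'
  · -- t = T : the value function is g
    apply ContinuousWithinAt.congr (hg.continuousWithinAt hx)
    · intro y hy
      rw [heq]
      exact value_at_T (ν := ν) hT.le hy
    · rw [heq]
      exact value_at_T (ν := ν) hT.le hx
  · -- t < T
    show Tendsto (fun z => valueFun ν S l g T z t) (𝓝[S] x) (𝓝 (valueFun ν S l g T x t))
    rw [tendsto_iff_seq_tendsto]
    intro zs hzs
    rw [tendsto_nhdsWithin_iff] at hzs
    obtain ⟨hzx, hzSev⟩ := hzs
    classical
    set z : ℕ → ℝ × ℝ := fun k => if zs k ∈ S then zs k else x with hzdef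
    have hzS' : ∀ k, z k ∈ S := by
      intro k
      rw [hzdef]
      by_cases h : zs k ∈ S
      · simp [h]
      · simp [h, hx]
    have heqev : ∀ᶠ k in atTop, z k = zs k := by
      filter_upwards [hzSev] with k hk
      rw [hzdef]
      simp [hk]
    have hzx' : Tendsto z atTop (𝓝 x) :=
      hzx.congr' (by filter_upwards [heqev] with k hk; exact hk.symm)
    have hmain : Tendsto (fun k => valueFun ν S l g T (z k) t) atTop
        (𝓝 (valueFun ν S l g T x t)) := by
      apply tendsto_order.2
      constructor
      · -- lower semicontinuity (direct method)
        intro b hb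
        by_contra hcon
        rw [Filter.not_eventually] at hcon
        have hfreq : ∃ᶠ k in atTop, valueFun ν S l g T (z k) t ≤ b :=
          hcon.mono fun k hk => not_lt.1 hk
        obtain ⟨φ, hφ, hφle⟩ := Filter.extraction_of_frequently_atTop hfreq
        have hδ : 0 < (valueFun ν S l g T x t - b) / 2 := by linarith
        have hsel : ∀ j : ℕ, ∃ p ∈ Gamma ν S t T (z (φ j)),
            cost l g t T p.1 p.2
              < valueFun ν S l g T (z (φ j)) t + (valueFun ν S l g T x t - b) / 2 :=
          fun j => value_exists_near_opt htT'.le (hzS' (φ j)) hδ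
        choose P hPmem hPcost using hsel
        have hCb : ∀ j, cost l g t T (P j).1 (P j).2
            ≤ b + (valueFun ν S l g T x t - b) / 2 := by
          intro j
          have h1 := hφle j
          have h2 := hPcost j
          linarith
        obtain ⟨q, hq, hqc⟩ := gamma_limit hν hSc hSne hl hg ht0 htT' hx
          (fun j => z (φ j)) (fun j => hzS' (φ j)) (hzx'.comp hφ.tendsto_atTop)
          P hPmem _ hCb
        have hval := value_le_cost ht0 htT'.le hl hM0 hMl hMg hq
        linarith
      · -- upper semicontinuity
        intro b hb
        rcases hyp with hAP | hUn
        · have hAPt := hAP t ⟨ht0, htT'⟩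
          have hδ : 0 < (b - valueFun ν S l g T x t) / 2 := by linarith
          obtain ⟨p, hp, hpc⟩ := value_exists_near_opt (ν := ν) (l := l) (g := g)
            htT'.le hx hδ
          obtain ⟨ys, as, hmem, hunif, hL2c, hcost⟩ :=
            hAPt p.1 p.2 (by rw [Prod.mk.eta]; exact hp) z hzS' hzx'
          have hev : ∀ᶠ k in atTop, cost l g t T (ys k) (as k) < b := by
            apply hcost.eventually_lt_const
            linarith
          filter_upwards [hev] with k hk
          have hle := value_le_cost ht0 htT'.le hl hM0 hMl hMg (hmem k)
          exact lt_of_le_of_lt hle hk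
        · have hxval : valueFun ν S l g T x t = (∫ τ in t..T, l x τ) + g x :=
            le_antisymm
              (value_le_const ht0 htT'.le hl hM0 hMl hMg hx)
              (unreachable_value_ge hT hUn hl ht0 htT'.le hx)
          have htd := tendsto_lconst hSc hl hg ht0 htT'.le hx z hzS' hzx'
          have hev : ∀ᶠ k in atTop, (∫ τ in t..T, l (z k) τ) + g (z k) < b := by
            apply htd.eventually_lt_const
            rw [← hxval]
            exact hb
          filter_upwards [hev] with k hk
          exact lt_of_le_of_lt (value_le_const ht0 htT'.le hl hM0 hMl hMg (hzS' k)) hk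
    apply hmain.congr'
    filter_upwards [heqev] with k hk
    simp only [Function.comp_apply]
    rw [hk]
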